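/- Let α, F ∈ ℂ with α ∉ ℤ∖{0} and F ≠ 0, let k ∈ ℤ∖{0}, a ∈ ℂ∖{0}, m ∈ ℂ, and let b, c ∈ ℂ satisfy kb = 1 and 1 − k + kFc = 0. On V define linear operators 𝕃_n, 𝕀_n by 𝕃_n(v_t) = t·v_{n+t} for t ≠ −n, 𝕃_n(v_{−n}) = −n(n+α)v_0, 𝕀_n(v_t) = 0 for t ≠ −n, 𝕀_n(v_{−n}) = nF·v_0, and define the linear map φ by φ(v_t) = aᵗ·m·v_{kt}. Then for all n ∈ ℤ: φ ∘ 𝕃_n = ((1/k)aⁿ·𝕃_{kn} + aⁿcn·𝕀_{kn}) ∘ φ and φ ∘ 𝕀_n = aⁿb·𝕀_{kn} ∘ φ; consequently (φ∘𝕃_n)(v_t) = t·a^{n+t}·m·v_{k(n+t)} for t ≠ −n, (φ∘𝕃_n)(v_{−n}) = −n(n+α)·m·v_0, (φ∘𝕀_n)(v_t) = 0 for t ≠ −n, and (φ∘𝕀_n)(v_{−n}) = nF·m·v_0. -/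

import Mathlib

/-- The ℂ-vector space with basis `{v t : t ∈ ℤ}` (finitely supported functions ℤ → ℂ). -/
abbrev V : Type := ℤ →₀ ℂ

/-- The basis vector `v t`. -/
noncomputable def v (t : ℤ) : V := Finsupp.single t 1

/-- The linear operator on `V` determined by its values on the basis vectors. -/
noncomputable def op (f : ℤ → V) : V →ₗ[ℂ] V := Finsupp.lift V ℂ ℤ f

/-- The operator `𝕃 n` of the module `B(α,F)`:
`𝕃 n (v t) = t v (n+t)` for `t ≠ -n`, `𝕃 n (v (-n)) = -n(n+α) v 0`. -/
noncomputable def Lop (α : ℂ) (n : ℤ) : V →ₗ[ℂ] V :=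
  op fun t => if t = -n then (-(n : ℂ) * (n + α)) • v 0 else (t : ℂ) • v (n + t)

/-- The operator `𝕀 n` of the module `B(α,F)`:
`𝕀 n (v t) = 0` for `t ≠ -n`, `𝕀 n (v (-n)) = nF • v 0`. -/
noncomputable def Iop (F : ℂ) (n : ℤ) : V →ₗ[ℂ] V :=
  op fun t => if t = -n then ((n : ℂ) * F) • v 0 else 0

/-- The twisting linear map `φ (v t) = aᵗ m • v (kt)`. -/
noncomputable def φmap (a m : ℂ) (k : ℤ) : V →ₗ[ℂ] V :=
  op fun t => (a ^ t * m) • v (k * t)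

lemma op_v (f : ℤ → V) (t : ℤ) : op f (v t) = f t := by
  rw [op, v, Finsupp.lift_apply, Finsupp.sum_single_index (by simp), one_smul]

lemma lhom_ext_v {f g : V →ₗ[ℂ] V} (h : ∀ t, f (v t) = g (v t)) : f = g := by
  apply Finsupp.lhom_ext
  intro t s
  have hs : (Finsupp.single t s : V) = s • v t := by
    rw [v, Finsupp.smul_single, smul_eq_mul, mul_one]
  rw [hs, map_smul, map_smul, h t]

theorem B_aF_intertwine (α F : ℂ) (hα : ∀ z : ℤ, z ≠ 0 → α ≠ (z : ℂ)) (hF : F ≠ 0)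
    (k : ℤ) (hk : k ≠ 0) (a : ℂ) (ha : a ≠ 0) (m b c : ℂ)
    (hb : (k : ℂ) * b = 1) (hc : 1 - (k : ℂ) + k * F * c = 0) :
    (∀ n : ℤ, φmap a m k ∘ₗ Lop α n
        = ((1 / (k : ℂ) * a ^ n) • Lop α (k * n) + (a ^ n * c * n) • Iop F (k * n))
            ∘ₗ φmap a m k) ∧
    (∀ n : ℤ, φmap a m k ∘ₗ Iop F n = ((a ^ n * b) • Iop F (k * n)) ∘ₗ φmap a m k) ∧
    (∀ n t : ℤ, t ≠ -n → φmap a m k (Lop α n (v t))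
        = ((t : ℂ) * a ^ (n + t) * m) • v (k * (n + t))) ∧
    (∀ n : ℤ, φmap a m k (Lop α n (v (-n))) = (-(n : ℂ) * (n + α) * m) • v 0) ∧
    (∀ n t : ℤ, t ≠ -n → φmap a m k (Iop F n (v t)) = 0) ∧
    (∀ n : ℤ, φmap a m k (Iop F n (v (-n))) = ((n : ℂ) * F * m) • v 0) := by
  have hkC : (k : ℂ) ≠ 0 := Int.cast_ne_zero.mpr hk
  -- basic evaluation lemmas
  have hL : ∀ (n t : ℤ), t ≠ -n → Lop α n (v t) = (t : ℂ) • v (n + t) := by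
    intro n t ht; rw [Lop, op_v]; simp [ht]
  have hLe : ∀ (n : ℤ), Lop α n (v (-n)) = (-(n : ℂ) * (n + α)) • v 0 := by
    intro n; rw [Lop, op_v]; simp
  have hI : ∀ (n t : ℤ), t ≠ -n → Iop F n (v t) = 0 := by
    intro n t ht; rw [Iop, op_v]; simp [ht]
  have hIe : ∀ (n : ℤ), Iop F n (v (-n)) = ((n : ℂ) * F) • v 0 := by
    intro n; rw [Iop, op_v]; simp
  have hφ : ∀ t : ℤ, φmap a m k (v t) = (a ^ t * m) • v (k * t) := by
    intro t; rw [φmap, op_v]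
  -- part 3
  have p3 : ∀ n t : ℤ, t ≠ -n → φmap a m k (Lop α n (v t))
      = ((t : ℂ) * a ^ (n + t) * m) • v (k * (n + t)) := by
    intro n t ht
    rw [hL n t ht, map_smul, hφ, smul_smul, zpow_add₀ ha]
    ring_nf
  have p4 : ∀ n : ℤ, φmap a m k (Lop α n (v (-n))) = (-(n : ℂ) * (n + α) * m) • v 0 := by
    intro n
    rw [hLe n, map_smul, hφ, smul_smul]
    norm_num
  have p5 : ∀ n t : ℤ, t ≠ -n → φmap a m k (Iop F n (v t)) = 0 := by
    intro n t ht; rw [hI n t ht, map_zero]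
  have p6 : ∀ n : ℤ, φmap a m k (Iop F n (v (-n))) = ((n : ℂ) * F * m) • v 0 := by
    intro n
    rw [hIe n, map_smul, hφ, smul_smul]
    norm_num
  refine ⟨?_, ?_, p3, p4, p5, p6⟩
  · intro n
    apply lhom_ext_v
    intro t
    simp only [LinearMap.comp_apply, LinearMap.add_apply, LinearMap.smul_apply, hφ, map_smul]
    by_cases ht : t = -n
    · subst ht
      have hkt : k * (-n) = -(k * n) := by ring
      rw [p4 n, hkt, hLe (k * n), hIe (k * n)]
      rw [smul_smul, smul_smul, ← add_smul, smul_smul]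
      congr 1
      have hc' : (k : ℂ) * F * c = (k : ℂ) - 1 := by linear_combination hc
      have hz : a ^ (-n : ℤ) * a ^ (n : ℤ) = 1 := by
        rw [← zpow_add₀ ha]; simp
      push_cast
      field_simp
      linear_combination (-((n:ℂ)^2 * m)) * hc' - ((n:ℂ) * m * (-((n:ℂ) * k + α) + (n:ℂ) * k * c * F)) * hz
    · rw [p3 n t ht]
      have hkt : k * t ≠ -(k * n) := by
        intro h
        apply ht
        have h2 : k * t = k * (-n) := by rw [mul_neg]; exact h
        exact mul_left_cancel₀ hk h2
      rw [hL (k * n) (k * t) hkt, hI (k * n) (k * t) hkt, smul_zero, add_zero]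
      rw [smul_smul, smul_smul]
      have hkk : k * n + k * t = k * (n + t) := by ring
      rw [hkk]
      congr 1
      rw [zpow_add₀ ha]
      push_cast
      field_simp
  · intro n
    apply lhom_ext_v
    intro t
    simp only [LinearMap.comp_apply, LinearMap.smul_apply, hφ, map_smul]
    by_cases ht : t = -n
    · subst ht
      have hkt : k * (-n) = -(k * n) := by ring
      rw [p6 n, hkt, hIe (k * n)]
      rw [smul_smul, smul_smul]
      congr 1
      have hz : a ^ (-n : ℤ) * a ^ (n : ℤ) = 1 := by
        rw [← zpow_add₀ ha]; simp
      push_cast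
      linear_combination (-((n:ℂ) * F * m)) * hb - (m * b * (k:ℂ) * (n:ℂ) * F) * hz
    · rw [p5 n t ht]
      have hkt : k * t ≠ -(k * n) := by
        intro h
        apply ht
        have h2 : k * t = k * (-n) := by rw [mul_neg]; exact h
        exact mul_left_cancel₀ hk h2
      rw [hI (k * n) (k * t) hkt, smul_zero, smul_zero]
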